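/- arXiv:0807.1784 — 5 statements merged into one kernel-verified Lean document; each statement's English description precedes it below -/
import Mathlib

section
/- Let x ∈ ℝ^{n+1} and let T = {j ∈ S : l_{v,j}(x) = F_v(x)} be the set of indices attaining the maximum at x. Then for every b ∈ (ℂ∖{0})^{n+1}, along the ray z(t) one has lim_{t→+∞} t^{−F_v(x)} · f_t(z(t)) = Σ_{j∈T} b^j. -/
open Filter

/-- With `T = {j ∈ S : l_{v,j}(x) = F_v(x)}` the set of maximizers at `x`, for
every `b ∈ (ℂ∖{0})^{n+1}`, along the ray `z(t)_α = t^{x_α} b_α` one has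
`t^{-F_v(x)} f_t(z(t)) → Σ_{j∈T} b^j` as `t → +∞`. -/
theorem rescaled_patchworking_limit (n : ℕ) (hn : 1 ≤ n)
    (S : Finset (Fin (n + 1) → ℤ)) (hS : S.Nonempty)
    (v : (Fin (n + 1) → ℤ) → ℝ)
    (l : (Fin (n + 1) → ℤ) → (Fin (n + 1) → ℝ) → ℝ)
    (hl : ∀ j x, l j x = ∑ α, (j α : ℝ) * x α - v j)
    (F : (Fin (n + 1) → ℝ) → ℝ)
    (hF : ∀ x, F x = S.sup' hS (fun j => l j x))
    (f : ℝ → (Fin (n + 1) → ℂ) → ℂ)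
    (hf : ∀ t z, f t z = ∑ j ∈ S, ((t ^ (-(v j)) : ℝ) : ℂ) * ∏ α, z α ^ (j α))
    (x : Fin (n + 1) → ℝ)
    (T : Finset (Fin (n + 1) → ℤ))
    (hT : ∀ j, j ∈ T ↔ j ∈ S ∧ l j x = F x)
    (b : Fin (n + 1) → ℂ) (hb : ∀ α, b α ≠ 0)
    (zr : ℝ → Fin (n + 1) → ℂ)
    (hz : ∀ t α, zr t α = ((t ^ (x α) : ℝ) : ℂ) * b α) :
    Tendsto (fun t : ℝ => ((t ^ (-(F x)) : ℝ) : ℂ) * f t (zr t)) atTop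
      (nhds (∑ j ∈ T, ∏ β, b β ^ (j β))) := by
  have hT' : T = S.filter (fun j => l j x = F x) := by
    ext j; simp [hT j, Finset.mem_filter]
  have key : Tendsto
      (fun t : ℝ => ∑ j ∈ S, ((t ^ (l j x - F x) : ℝ) : ℂ) * ∏ β, b β ^ (j β)) atTop
      (nhds (∑ j ∈ T, ∏ β, b β ^ (j β))) := by
    rw [hT', Finset.sum_filter]
    apply tendsto_finset_sum
    intro j hj
    by_cases h : l j x = F x
    · rw [if_pos h]
      have heq : ∀ᶠ t : ℝ in atTop,
          (∏ β, b β ^ (j β)) = ((t ^ (l j x - F x) : ℝ) : ℂ) * ∏ β, b β ^ (j β) := by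
        filter_upwards [eventually_gt_atTop (0:ℝ)] with t ht
        rw [h, sub_self, Real.rpow_zero]; simp
      exact Tendsto.congr' heq tendsto_const_nhds
    · rw [if_neg h]
      have hle : l j x ≤ F x := by rw [hF]; exact Finset.le_sup' (fun j => l j x) hj
      have hd : 0 < F x - l j x := sub_pos.mpr (lt_of_le_of_ne hle h)
      have h1 : Tendsto (fun t : ℝ => t ^ (l j x - F x)) atTop (nhds 0) := by
        have := tendsto_rpow_neg_atTop hd
        simpa [neg_sub] using this
      have h2 : Tendsto (fun t : ℝ => ((t ^ (l j x - F x) : ℝ) : ℂ)) atTop (nhds 0) := by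
        have := (Complex.continuous_ofReal.tendsto 0).comp h1
        simpa [Function.comp_def] using this
      simpa using h2.mul_const (∏ β, b β ^ (j β))
  have heq : ∀ᶠ t : ℝ in atTop,
      (∑ j ∈ S, ((t ^ (l j x - F x) : ℝ) : ℂ) * ∏ β, b β ^ (j β))
        = ((t ^ (-(F x)) : ℝ) : ℂ) * f t (zr t) := by
    filter_upwards [eventually_gt_atTop (0:ℝ)] with t ht
    rw [hf, Finset.mul_sum]
    refine Finset.sum_congr rfl fun j hj => ?_
    have hzp : ∀ α, (zr t α) ^ (j α)
        = ((t ^ (x α * (j α : ℝ)) : ℝ) : ℂ) * (b α) ^ (j α) := by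
      intro α
      rw [hz t α, mul_zpow, ← Complex.ofReal_zpow]
      congr 2
      rw [Real.rpow_mul ht.le, Real.rpow_intCast]
    calc ((t ^ (l j x - F x) : ℝ) : ℂ) * ∏ β, b β ^ (j β)
        = ((t ^ (-(F x)) : ℝ) : ℂ) * (((t ^ (-(v j)) : ℝ) : ℂ)
            * (((t ^ (∑ α, x α * (j α : ℝ)) : ℝ) : ℂ) * ∏ β, b β ^ (j β))) := by
          rw [← mul_assoc, ← mul_assoc, ← Complex.ofReal_mul, ← Complex.ofReal_mul,
            ← Real.rpow_add ht, ← Real.rpow_add ht]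
          congr 3
          rw [hl]
          have : ∑ α, (j α : ℝ) * x α = ∑ α, x α * (j α : ℝ) := by
            exact Finset.sum_congr rfl fun α _ => mul_comm _ _
          rw [this]; ring
      _ = ((t ^ (-(F x)) : ℝ) : ℂ) * (((t ^ (-(v j)) : ℝ) : ℂ) * ∏ α, (zr t α) ^ (j α)) := by
          congr 2
          rw [Real.rpow_sum_of_pos ht]
          push_cast
          rw [← Finset.prod_mul_distrib]
          exact Finset.prod_congr rfl fun α _ => (hzp α).symm
  exact key.congr' heq
end

section
/- Let x ∈ ℝ^{n+1} and let T = {j ∈ S : l_{v,j}(x) = F_v(x)}. Then for every b ∈ (ℂ∖{0})^{n+1} and every α ∈ {1,…,n+1}, along the ray z(t) one has lim_{t→+∞} t^{−F_v(x)} · z(t)_α · ∂f_t/∂z_α(z(t)) = Σ_{j∈T} j_α b^j. -/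
open Filter

/-- With `T = {j ∈ S : l_{v,j}(x) = F_v(x)}`, for every `b ∈ (ℂ∖{0})^{n+1}` and
every index `α`, along the ray `z(t)_α = t^{x_α} b_α` one has
`t^{-F_v(x)} · z(t)_α · ∂f_t/∂z_α(z(t)) → Σ_{j∈T} j_α b^j` as `t → +∞`. -/
theorem rescaled_log_derivative_limit (n : ℕ) (hn : 1 ≤ n)
    (S : Finset (Fin (n + 1) → ℤ)) (hS : S.Nonempty)
    (v : (Fin (n + 1) → ℤ) → ℝ)
    (l : (Fin (n + 1) → ℤ) → (Fin (n + 1) → ℝ) → ℝ)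
    (hl : ∀ j x, l j x = ∑ α, (j α : ℝ) * x α - v j)
    (F : (Fin (n + 1) → ℝ) → ℝ)
    (hF : ∀ x, F x = S.sup' hS (fun j => l j x))
    (f : ℝ → (Fin (n + 1) → ℂ) → ℂ)
    (hf : ∀ t z, f t z = ∑ j ∈ S, ((t ^ (-(v j)) : ℝ) : ℂ) * ∏ α, z α ^ (j α))
    (pd : ℝ → Fin (n + 1) → (Fin (n + 1) → ℂ) → ℂ)
    (hpd : ∀ t α z, pd t α z = deriv (fun w => f t (Function.update z α w)) (z α))
    (x : Fin (n + 1) → ℝ)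
    (T : Finset (Fin (n + 1) → ℤ))
    (hT : ∀ j, j ∈ T ↔ j ∈ S ∧ l j x = F x)
    (b : Fin (n + 1) → ℂ) (hb : ∀ α, b α ≠ 0)
    (zr : ℝ → Fin (n + 1) → ℂ)
    (hz : ∀ t α, zr t α = ((t ^ (x α) : ℝ) : ℂ) * b α)
    (α : Fin (n + 1)) :
    Tendsto (fun t : ℝ => ((t ^ (-(F x)) : ℝ) : ℂ) * (zr t α * pd t α (zr t))) atTop
      (nhds (∑ j ∈ T, (j α : ℂ) * ∏ β, b β ^ (j β))) := by
  set g : ℝ → ℂ := fun t =>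
    ∑ j ∈ S, (j α : ℂ) * ((t ^ (l j x - F x) : ℝ) : ℂ) * ∏ β, b β ^ (j β) with hg
  -- eventual equality of the LHS with `g`
  have heq : ∀ᶠ t : ℝ in atTop,
      ((t ^ (-(F x)) : ℝ) : ℂ) * (zr t α * pd t α (zr t)) = g t := by
    filter_upwards [eventually_gt_atTop (0 : ℝ)] with t ht
    have hzne : ∀ β, zr t β ≠ 0 := by
      intro β
      rw [hz]
      exact mul_ne_zero (by exact_mod_cast (Real.rpow_pos_of_pos ht (x β)).ne') (hb β)
    -- compute the partial derivative
    have hderiv : HasDerivAt (fun w => f t (Function.update (zr t) α w))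
        (∑ j ∈ S, ((t ^ (-(v j)) : ℝ) : ℂ) *
          (((j α : ℂ) * zr t α ^ (j α - 1)) * ∏ β ∈ Finset.univ \ {α}, zr t β ^ (j β)))
        (zr t α) := by
      have hprod : ∀ (j : Fin (n + 1) → ℤ) (w : ℂ),
          (∏ β, (Function.update (zr t) α w β) ^ (j β)) =
            w ^ (j α) * ∏ β ∈ Finset.univ \ {α}, zr t β ^ (j β) := by
        intro j w
        have h1 : (fun β => (Function.update (zr t) α w β) ^ (j β)) =
            Function.update (fun β => zr t β ^ (j β)) α (w ^ (j α)) := by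
          ext β
          rcases eq_or_ne β α with rfl | h
          · simp
          · simp [Function.update_of_ne h]
        rw [h1, Finset.prod_update_of_mem (Finset.mem_univ α)]
      simp only [hf, hprod]
      apply HasDerivAt.fun_sum
      intro j _
      exact (((hasDerivAt_zpow (j α) (zr t α) (Or.inl (hzne α))).mul_const
        (∏ β ∈ Finset.univ \ {α}, zr t β ^ (j β))).const_mul _)
    have hpd' : pd t α (zr t) = ∑ j ∈ S, ((t ^ (-(v j)) : ℝ) : ℂ) *
        (((j α : ℂ) * zr t α ^ (j α - 1)) * ∏ β ∈ Finset.univ \ {α}, zr t β ^ (j β)) := by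
      rw [hpd]; exact hderiv.deriv
    rw [hpd', Finset.mul_sum, Finset.mul_sum, hg]
    refine Finset.sum_congr rfl ?_
    intro j hj
    have hfull : zr t α * (zr t α ^ (j α - 1) * ∏ β ∈ Finset.univ \ {α}, zr t β ^ (j β))
        = ∏ β, zr t β ^ (j β) := by
      rw [← mul_assoc, ← zpow_one_add₀ (hzne α), show (1 : ℤ) + (j α - 1) = j α by ring,
        Finset.sdiff_singleton_eq_erase]
      exact Finset.mul_prod_erase Finset.univ (fun β => zr t β ^ (j β)) (Finset.mem_univ α)
    have hbig : (∏ β, zr t β ^ (j β)) =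
        ((t ^ (∑ β, x β * (j β : ℝ)) : ℝ) : ℂ) * ∏ β, b β ^ (j β) := by
      have hR : (t ^ (∑ β, x β * (j β : ℝ)) : ℝ) = ∏ β, (t ^ (x β * (j β : ℝ)) : ℝ) :=
        Real.rpow_sum_of_pos ht (fun β => x β * (j β : ℝ)) Finset.univ
      rw [hR, Complex.ofReal_prod, ← Finset.prod_mul_distrib]
      refine Finset.prod_congr rfl ?_
      intro β _
      rw [hz, mul_zpow, ← Complex.ofReal_zpow, ← Real.rpow_intCast (t ^ (x β)) (j β),
        ← Real.rpow_mul ht.le]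
    calc ((t ^ (-F x) : ℝ) : ℂ) * (zr t α * (((t ^ (-(v j)) : ℝ) : ℂ) *
          (((j α : ℂ) * zr t α ^ (j α - 1)) * ∏ β ∈ Finset.univ \ {α}, zr t β ^ (j β))))
        = (j α : ℂ) * (((t ^ (-F x) : ℝ) : ℂ) * ((t ^ (-(v j)) : ℝ) : ℂ) *
            (zr t α * (zr t α ^ (j α - 1) * ∏ β ∈ Finset.univ \ {α}, zr t β ^ (j β)))) := by
          ring
      _ = (j α : ℂ) * ((t ^ (l j x - F x) : ℝ) : ℂ) * ∏ β, b β ^ (j β) := by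
          have h3 : ((t ^ (l j x - F x) : ℝ) : ℂ) = ((t ^ (-F x) : ℝ) : ℂ) *
              ((t ^ (-(v j)) : ℝ) : ℂ) * ((t ^ (∑ β, x β * (j β : ℝ)) : ℝ) : ℂ) := by
            rw [← Complex.ofReal_mul, ← Complex.ofReal_mul, ← Real.rpow_add ht,
              ← Real.rpow_add ht]
            congr 1
            rw [hl, show (∑ β, (j β : ℝ) * x β) = ∑ β, x β * (j β : ℝ) from
              Finset.sum_congr rfl fun β _ => mul_comm _ _]
            ring
          rw [hfull, hbig, h3]
          ring
  -- the limit of g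
  have hTS : T ⊆ S := fun j hj => ((hT j).1 hj).1
  have hlim : Tendsto g atTop
      (nhds (∑ j ∈ S, if j ∈ T then (j α : ℂ) * ∏ β, b β ^ (j β) else 0)) := by
    rw [hg]
    apply tendsto_finset_sum
    intro j hj
    rcases eq_or_ne (l j x) (F x) with hc | hc
    · have hjT : j ∈ T := (hT j).2 ⟨hj, hc⟩
      simp only [hjT, if_true, hc, sub_self]
      have : ∀ᶠ t : ℝ in atTop,
          (j α : ℂ) * ∏ β, b β ^ (j β) =
            (j α : ℂ) * ((t ^ (0 : ℝ) : ℝ) : ℂ) * ∏ β, b β ^ (j β) := by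
        filter_upwards with t
        simp
      exact (tendsto_const_nhds.congr' this)
    · have hjT : j ∉ T := fun h => hc ((hT j).1 h).2
      have hle : l j x ≤ F x := by
        rw [hF]; exact Finset.le_sup' (fun j => l j x) hj
      have hneg : l j x - F x < 0 := by
        rcases lt_of_le_of_ne hle hc with h
        linarith
      simp only [hjT, if_false]
      have h0 : Tendsto (fun t : ℝ => ((t ^ (l j x - F x) : ℝ) : ℂ)) atTop (nhds 0) := by
        have := tendsto_rpow_neg_atTop (y := -(l j x - F x)) (by linarith)
        simp only [neg_neg] at this
        have := this.comp (tendsto_id (α := ℝ))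
        exact (Complex.continuous_ofReal.tendsto 0).comp (by simpa using this) |>.congr
          (fun t => rfl) |>.mono_right (by simp)
      have : Tendsto (fun t : ℝ =>
          (j α : ℂ) * ((t ^ (l j x - F x) : ℝ) : ℂ) * ∏ β, b β ^ (j β)) atTop
          (nhds ((j α : ℂ) * 0 * ∏ β, b β ^ (j β))) :=
        ((h0.const_mul _).mul_const _)
      simpa using this
  have hsum : (∑ j ∈ S, if j ∈ T then (j α : ℂ) * ∏ β, b β ^ (j β) else 0)
      = ∑ j ∈ T, (j α : ℂ) * ∏ β, b β ^ (j β) := by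
    rw [Finset.sum_ite_mem, Finset.inter_eq_right.mpr hTS]
  rw [← hsum]
  exact hlim.congr' (heq.mono fun t h => h.symm)
end

section
/- Let i ≠ j^{(1)} be elements of S and let x ∈ ℝ^{n+1} satisfy l_{v,i}(x) = l_{v,j^{(1)}}(x) > l_{v,k}(x) for all k ∈ S ∖ {i, j^{(1)}} (i.e., x lies in the open face 𝔉(i, j^{(1)})). Let b ∈ (ℂ∖{0})^{n+1} satisfy b^i + b^{j^{(1)}} = 0, and let α be an index with i_α ≠ j^{(1)}_α. Then along the ray z(t): lim_{t→+∞} t^{−F_v(x)} · z(t)_α · ∂f_t/∂z_α(z(t)) = (j^{(1)}_α − i_α) · b^{j^{(1)}}, and this limit is nonzero. -/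
open Filter

/-- If `x` lies in the open face `𝔉(i, j¹)` (i.e. `l_{v,i}(x) = l_{v,j¹}(x) >
l_{v,k}(x)` for all other `k ∈ S`), `b ∈ (ℂ∖{0})^{n+1}` satisfies `b^i + b^{j¹} = 0`, and `α`
is an index with `i_α ≠ j¹_α`, then along the ray `z(t)_α = t^{x_α} b_α` one has
`t^{-F_v(x)} z(t)_α ∂f_t/∂z_α(z(t)) → (j¹_α - i_α) b^{j¹} ≠ 0`. -/
theorem face_log_derivative_limit (n : ℕ) (hn : 1 ≤ n)
    (S : Finset (Fin (n + 1) → ℤ)) (hS : S.Nonempty)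
    (v : (Fin (n + 1) → ℤ) → ℝ)
    (l : (Fin (n + 1) → ℤ) → (Fin (n + 1) → ℝ) → ℝ)
    (hl : ∀ j x, l j x = ∑ α, (j α : ℝ) * x α - v j)
    (F : (Fin (n + 1) → ℝ) → ℝ)
    (hF : ∀ x, F x = S.sup' hS (fun j => l j x))
    (f : ℝ → (Fin (n + 1) → ℂ) → ℂ)
    (hf : ∀ t z, f t z = ∑ j ∈ S, ((t ^ (-(v j)) : ℝ) : ℂ) * ∏ α, z α ^ (j α))
    (pd : ℝ → Fin (n + 1) → (Fin (n + 1) → ℂ) → ℂ)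
    (hpd : ∀ t α z, pd t α z = deriv (fun w => f t (Function.update z α w)) (z α))
    (i j₁ : Fin (n + 1) → ℤ) (hi : i ∈ S) (hj₁ : j₁ ∈ S) (hij : i ≠ j₁)
    (x : Fin (n + 1) → ℝ)
    (hface : l i x = l j₁ x ∧ ∀ k ∈ S, k ≠ i → k ≠ j₁ → l k x < l i x)
    (b : Fin (n + 1) → ℂ) (hb : ∀ α, b α ≠ 0)
    (hbsum : (∏ β, b β ^ (i β)) + (∏ β, b β ^ (j₁ β)) = 0)
    (α : Fin (n + 1)) (hα : i α ≠ j₁ α)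
    (zr : ℝ → Fin (n + 1) → ℂ)
    (hz : ∀ t β, zr t β = ((t ^ (x β) : ℝ) : ℂ) * b β) :
    Tendsto (fun t : ℝ => ((t ^ (-(F x)) : ℝ) : ℂ) * (zr t α * pd t α (zr t))) atTop
      (nhds (((j₁ α - i α : ℤ) : ℂ) * ∏ β, b β ^ (j₁ β))) ∧
    ((j₁ α - i α : ℤ) : ℂ) * (∏ β, b β ^ (j₁ β)) ≠ 0 := by
  obtain ⟨heq, hlt⟩ := hface
  have hFx : F x = l i x := by
    rw [hF]
    apply le_antisymm
    · apply Finset.sup'_le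
      intro k hk
      by_cases hki : k = i
      · subst hki; exact le_refl _
      by_cases hkj : k = j₁
      · subst hkj; exact le_of_eq heq.symm
      · exact (hlt k hk hki hkj).le
    · exact Finset.le_sup' (fun j => l j x) hi
  have hFj₁ : l j₁ x = F x := by rw [hFx, heq]
  set e : (Fin (n + 1) → ℤ) → ℝ := fun j => l j x - F x with he
  have hei : e i = 0 := by simp [he, hFx]
  have hej : e j₁ = 0 := by simp [he, hFj₁]
  have hen : ∀ k ∈ S, k ≠ i → k ≠ j₁ → e k < 0 := by
    intro k hk h1 h2
    have := hlt k hk h1 h2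
    simp only [he]
    rw [hFx]; linarith
  set B : (Fin (n + 1) → ℤ) → ℂ := fun j => ∏ β, b β ^ j β with hB
  have hBne : ∀ j, B j ≠ 0 := fun j =>
    Finset.prod_ne_zero_iff.mpr fun β _ => zpow_ne_zero _ (hb β)
  -- key pointwise identity for t > 1
  have key : ∀ t : ℝ, 1 < t →
      ((t ^ (-(F x)) : ℝ) : ℂ) * (zr t α * pd t α (zr t)) =
        ∑ j ∈ S, (j α : ℂ) * ((t ^ (e j) : ℝ) : ℂ) * B j := by
    intro t ht
    have ht0 : (0 : ℝ) < t := lt_trans one_pos ht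
    have hzne : ∀ β, zr t β ≠ 0 := by
      intro β
      rw [hz]
      exact mul_ne_zero (by exact_mod_cast (Real.rpow_pos_of_pos ht0 _).ne') (hb β)
    have hwne : zr t α ≠ 0 := hzne α
    have hsplit : ∀ (j : Fin (n + 1) → ℤ) (w : ℂ),
        (∏ β, (Function.update (zr t) α w β) ^ j β)
          = w ^ j α * ∏ β ∈ Finset.univ \ {α}, (zr t β) ^ j β := by
      intro j w
      have hupd : (fun β => (Function.update (zr t) α w β) ^ j β)
          = Function.update (fun β => (zr t β) ^ j β) α (w ^ j α) := by
        funext β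
        by_cases hβ : β = α
        · subst hβ; simp
        · simp [Function.update_of_ne hβ]
      rw [hupd, Finset.prod_update_of_mem (Finset.mem_univ α)]
    have hpd' : pd t α (zr t) =
        ∑ j ∈ S, ((t ^ (-(v j)) : ℝ) : ℂ) *
          ((j α : ℂ) * (zr t α) ^ (j α - 1) * ∏ β ∈ Finset.univ \ {α}, (zr t β) ^ j β) := by
      rw [hpd]
      have hfe : (fun w => f t (Function.update (zr t) α w)) =
          fun w => ∑ j ∈ S, ((t ^ (-(v j)) : ℝ) : ℂ) *
            (w ^ j α * ∏ β ∈ Finset.univ \ {α}, (zr t β) ^ j β) := by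
        funext w
        rw [hf]
        exact Finset.sum_congr rfl fun j _ => by rw [hsplit]
      rw [hfe, deriv_fun_sum]
      · refine Finset.sum_congr rfl fun j _ => ?_
        rw [deriv_const_mul _ ((differentiableAt_zpow.mpr (Or.inl hwne)).mul_const _),
          deriv_mul_const (differentiableAt_zpow.mpr (Or.inl hwne)), deriv_zpow]
      · intro j _
        exact (((differentiableAt_zpow.mpr (Or.inl hwne)).mul_const _)).const_mul _
    rw [hpd']
    simp only [Finset.mul_sum]
    refine Finset.sum_congr rfl fun j hj => ?_
    have hzz : zr t α * (zr t α) ^ (j α - 1) = (zr t α) ^ j α := by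
      rw [← zpow_one_add₀ hwne]
      congr 1
      ring
    have hrec : (zr t α) ^ j α * ∏ β ∈ Finset.univ \ {α}, (zr t β) ^ j β
        = ∏ β, (zr t β) ^ j β := by
      rw [Finset.sdiff_singleton_eq_erase]
      exact Finset.mul_prod_erase Finset.univ (fun β => zr t β ^ j β) (Finset.mem_univ α)
    have hprod : (∏ β, (zr t β) ^ j β)
        = ((t ^ (∑ β, (j β : ℝ) * x β) : ℝ) : ℂ) * B j := by
      have h1 : ∀ β, (zr t β) ^ j β
          = ((t ^ (x β * (j β : ℝ)) : ℝ) : ℂ) * (b β) ^ j β := by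
        intro β
        rw [hz, mul_zpow, ← Complex.ofReal_zpow, ← Real.rpow_intCast (t ^ x β) (j β),
          ← Real.rpow_mul ht0.le]
      rw [Finset.prod_congr rfl fun β _ => h1 β, Finset.prod_mul_distrib,
        ← Complex.ofReal_prod, ← Real.rpow_sum_of_pos ht0]
      congr 3
      · exact Finset.sum_congr rfl fun β _ => mul_comm _ _
    calc ((t ^ (-(F x)) : ℝ) : ℂ) * (zr t α * (((t ^ (-(v j)) : ℝ) : ℂ) *
          ((j α : ℂ) * (zr t α) ^ (j α - 1) * ∏ β ∈ Finset.univ \ {α}, (zr t β) ^ j β)))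
        = ((t ^ (-(F x)) : ℝ) : ℂ) * ((t ^ (-(v j)) : ℝ) : ℂ) * ((j α : ℂ) *
            ((zr t α * (zr t α) ^ (j α - 1)) *
              ∏ β ∈ Finset.univ \ {α}, (zr t β) ^ j β)) := by ring
      _ = ((t ^ (-(F x)) : ℝ) : ℂ) * ((t ^ (-(v j)) : ℝ) : ℂ) * ((j α : ℂ) *
            (((t ^ (∑ β, (j β : ℝ) * x β) : ℝ) : ℂ) * B j)) := by
          rw [hzz, hrec, hprod]
      _ = (j α : ℂ) * (((t ^ (-(F x)) : ℝ) : ℂ) * ((t ^ (-(v j)) : ℝ) : ℂ) *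
            ((t ^ (∑ β, (j β : ℝ) * x β) : ℝ) : ℂ)) * B j := by ring
      _ = (j α : ℂ) * ((t ^ (e j) : ℝ) : ℂ) * B j := by
          congr 2
          rw [← Complex.ofReal_mul, ← Complex.ofReal_mul,
            ← Real.rpow_add ht0, ← Real.rpow_add ht0]
          congr 1
          simp only [he]
          rw [hl]
          ring
  -- limits
  have hlim : ∀ j ∈ S,
      Tendsto (fun t : ℝ => (j α : ℂ) * ((t ^ (e j) : ℝ) : ℂ) * B j) atTop
        (nhds (if j = i ∨ j = j₁ then (j α : ℂ) * B j else 0)) := by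
    intro j hj
    by_cases hcase : j = i ∨ j = j₁
    · have hej0 : e j = 0 := by
        rcases hcase with h | h
        · subst h; exact hei
        · subst h; exact hej
      simp only [hej0, Real.rpow_zero, Complex.ofReal_one, mul_one, if_pos hcase]
      exact tendsto_const_nhds
    · obtain ⟨h1, h2⟩ := not_or.mp hcase
      have hneg := hen j hj h1 h2
      have hr1 : Tendsto (fun t : ℝ => t ^ (e j)) atTop (nhds 0) := by
        have := tendsto_rpow_neg_atTop (neg_pos.mpr hneg)
        simpa using this
      have hr2 : Tendsto (fun t : ℝ => ((t ^ (e j) : ℝ) : ℂ)) atTop (nhds 0) := by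
        simpa [Function.comp_def] using (Complex.continuous_ofReal.tendsto 0).comp hr1
      have := (hr2.const_mul ((j α : ℂ))).mul_const (B j)
      simp only [mul_zero, zero_mul] at this
      rw [if_neg hcase]
      exact this
  have hsum := tendsto_finset_sum S hlim
  have hLsum : (∑ j ∈ S, if j = i ∨ j = j₁ then (j α : ℂ) * B j else 0)
      = ((j₁ α - i α : ℤ) : ℂ) * B j₁ := by
    have hsub : ({i, j₁} : Finset (Fin (n + 1) → ℤ)) ⊆ S := by
      intro k hk
      rcases Finset.mem_insert.mp hk with h | h
      · subst h; exact hi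
      · rw [Finset.mem_singleton.mp h]; exact hj₁
    rw [← Finset.sum_subset hsub]
    · rw [Finset.sum_pair hij, if_pos (Or.inl rfl), if_pos (Or.inr rfl)]
      have hbi : B i = -B j₁ := by
        have := hbsum
        simp only [hB]
        linear_combination this
      rw [hbi]
      push_cast
      ring
    · intro k _ hknot
      rw [if_neg]
      intro hc
      rcases hc with h | h
      · exact hknot (by simp [h])
      · exact hknot (by simp [h])
  constructor
  · rw [hLsum] at hsum
    refine Tendsto.congr' ?_ hsum
    filter_upwards [eventually_gt_atTop (1 : ℝ)] with t ht
    exact (key t ht).symm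
  · exact mul_ne_zero (Int.cast_ne_zero.mpr (sub_ne_zero.mpr fun h => hα h.symm)) (hBne j₁)
end

section
/- Let i ≠ j^{(1)} be elements of S and let x ∈ ℝ^{n+1} satisfy l_{v,i}(x) = l_{v,j^{(1)}}(x) > l_{v,k}(x) for all k ∈ S ∖ {i, j^{(1)}}. Let b ∈ (ℂ∖{0})^{n+1} satisfy b^i + b^{j^{(1)}} = 0, and let α be an index with i_α ≠ j^{(1)}_α. Then along the ray z(t): for all sufficiently large t the quantity z(t)_α · ∂f_t/∂z_α(z(t)) is nonzero, and lim_{t→+∞} (t^{−v(i)} z(t)^i) / (z(t)_α · ∂f_t/∂z_α(z(t))) = 1 / (i_α − j^{(1)}_α). -/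
open Filter

lemma prod_update_zpow {n : ℕ} (z : Fin (n+1) → ℂ) (α : Fin (n+1)) (w : ℂ) (j : Fin (n+1) → ℤ) :
    (∏ β, Function.update z α w β ^ (j β)) =
      w ^ (j α) * ∏ β ∈ Finset.univ.erase α, z β ^ (j β) := by
  rw [← Finset.mul_prod_erase Finset.univ _ (Finset.mem_univ α)]
  rw [Function.update_self]
  congr 1
  refine Finset.prod_congr rfl fun β hβ => ?_
  rw [Function.update_of_ne (Finset.mem_erase.1 hβ).1]

lemma pd_formula {n : ℕ} (S : Finset (Fin (n+1) → ℤ)) (c : (Fin (n+1) → ℤ) → ℂ)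
    (z : Fin (n+1) → ℂ) (α : Fin (n+1)) (hzα : z α ≠ 0) :
    z α * deriv (fun w => ∑ j ∈ S, c j * ∏ β, Function.update z α w β ^ (j β)) (z α)
      = ∑ j ∈ S, c j * (j α : ℂ) * ∏ β, z β ^ (j β) := by
  have h1 : (fun w : ℂ => ∑ j ∈ S, c j * ∏ β, Function.update z α w β ^ (j β))
      = fun w => ∑ j ∈ S, c j * (w ^ (j α) * ∏ β ∈ Finset.univ.erase α, z β ^ (j β)) := by
    funext w
    exact Finset.sum_congr rfl fun j _ => by rw [prod_update_zpow]
  have H : HasDerivAt (fun w : ℂ => ∑ j ∈ S, c j * (w ^ (j α) * ∏ β ∈ Finset.univ.erase α, z β ^ (j β)))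
      (∑ j ∈ S, c j * ((j α : ℂ) * z α ^ (j α - 1) * ∏ β ∈ Finset.univ.erase α, z β ^ (j β))) (z α) := by
    apply HasDerivAt.fun_sum
    intro j _
    have h2 := hasDerivAt_zpow (j α) (z α) (Or.inl hzα)
    simpa [mul_comm, mul_assoc, mul_left_comm] using (h2.mul_const (∏ β ∈ Finset.univ.erase α, z β ^ (j β))).const_mul (c j)
  rw [h1, H.deriv, Finset.mul_sum]
  refine Finset.sum_congr rfl fun j _ => ?_
  rw [← Finset.mul_prod_erase Finset.univ (fun β => z β ^ (j β)) (Finset.mem_univ α)]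
  have hz1 : z α * z α ^ (j α - 1) = z α ^ (j α) := by
    rw [← zpow_one_add₀ hzα]; congr 1; ring
  rw [← hz1]; ring

/-- Under the same face hypotheses as Statement 12, for all sufficiently large
`t` the quantity `z(t)_α ∂f_t/∂z_α(z(t))` is nonzero, and
`(t^{-v(i)} z(t)^i) / (z(t)_α ∂f_t/∂z_α(z(t))) → 1/(i_α - j¹_α)` as `t → +∞`. -/
theorem face_residue_quotient_limit (n : ℕ) (hn : 1 ≤ n)
    (S : Finset (Fin (n + 1) → ℤ)) (hS : S.Nonempty)
    (v : (Fin (n + 1) → ℤ) → ℝ)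
    (l : (Fin (n + 1) → ℤ) → (Fin (n + 1) → ℝ) → ℝ)
    (hl : ∀ j x, l j x = ∑ α, (j α : ℝ) * x α - v j)
    (F : (Fin (n + 1) → ℝ) → ℝ)
    (hF : ∀ x, F x = S.sup' hS (fun j => l j x))
    (f : ℝ → (Fin (n + 1) → ℂ) → ℂ)
    (hf : ∀ t z, f t z = ∑ j ∈ S, ((t ^ (-(v j)) : ℝ) : ℂ) * ∏ α, z α ^ (j α))
    (pd : ℝ → Fin (n + 1) → (Fin (n + 1) → ℂ) → ℂ)
    (hpd : ∀ t α z, pd t α z = deriv (fun w => f t (Function.update z α w)) (z α))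
    (i j₁ : Fin (n + 1) → ℤ) (hi : i ∈ S) (hj₁ : j₁ ∈ S) (hij : i ≠ j₁)
    (x : Fin (n + 1) → ℝ)
    (hface : l i x = l j₁ x ∧ ∀ k ∈ S, k ≠ i → k ≠ j₁ → l k x < l i x)
    (b : Fin (n + 1) → ℂ) (hb : ∀ α, b α ≠ 0)
    (hbsum : (∏ β, b β ^ (i β)) + (∏ β, b β ^ (j₁ β)) = 0)
    (α : Fin (n + 1)) (hα : i α ≠ j₁ α)
    (zr : ℝ → Fin (n + 1) → ℂ)
    (hz : ∀ t β, zr t β = ((t ^ (x β) : ℝ) : ℂ) * b β) :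
    (∀ᶠ t : ℝ in atTop, zr t α * pd t α (zr t) ≠ 0) ∧
    Tendsto (fun t : ℝ =>
        (((t ^ (-(v i)) : ℝ) : ℂ) * ∏ β, zr t β ^ (i β)) / (zr t α * pd t α (zr t)))
      atTop (nhds (1 / ((i α - j₁ α : ℤ) : ℂ))) := by
  set B : (Fin (n + 1) → ℤ) → ℂ := fun j => ∏ β, b β ^ (j β) with hBdef
  have hB : ∀ j, B j ≠ 0 := fun j =>
    Finset.prod_ne_zero_iff.2 fun β _ => zpow_ne_zero _ (hb β)
  -- value of monomials along the ray
  have hval : ∀ (j : Fin (n + 1) → ℤ) (t : ℝ), 0 < t →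
      ((t ^ (-(v j)) : ℝ) : ℂ) * ∏ β, zr t β ^ (j β) = ((t ^ (l j x) : ℝ) : ℂ) * B j := by
    intro j t ht
    have hprod : (∏ β, zr t β ^ (j β)) =
        ((t ^ (∑ β, (j β : ℝ) * x β) : ℝ) : ℂ) * B j := by
      have : ∀ β, zr t β ^ (j β) = ((t ^ ((j β : ℝ) * x β) : ℝ) : ℂ) * b β ^ (j β) := by
        intro β
        rw [hz, mul_zpow, ← Complex.ofReal_zpow]
        congr 2
        rw [← Real.rpow_intCast (t ^ (x β)) (j β), ← Real.rpow_mul ht.le, mul_comm]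
      rw [Finset.prod_congr rfl fun β _ => this β, Finset.prod_mul_distrib,
        ← Complex.ofReal_prod, ← Real.rpow_sum_of_pos ht]
    rw [hprod, ← mul_assoc, ← Complex.ofReal_mul, ← Real.rpow_add ht, hl]
    ring_nf
  -- the normalized denominator sum
  set h : ℝ → ℂ := fun t => ∑ j ∈ S, ((j α : ℤ) : ℂ) * ((t ^ (l j x - l i x) : ℝ) : ℂ) * B j
    with hhdef
  have hzα : ∀ t : ℝ, 0 < t → zr t α ≠ 0 := by
    intro t ht
    rw [hz]
    exact mul_ne_zero (by exact_mod_cast (Real.rpow_pos_of_pos ht (x α)).ne') (hb α)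
  have hkey : ∀ t : ℝ, 0 < t →
      zr t α * pd t α (zr t) = ((t ^ (l i x) : ℝ) : ℂ) * h t := by
    intro t ht
    have h1 : (fun w => f t (Function.update (zr t) α w)) =
        fun w => ∑ j ∈ S, ((t ^ (-(v j)) : ℝ) : ℂ) * ∏ β, Function.update (zr t) α w β ^ (j β) := by
      funext w; rw [hf]
    rw [hpd, h1, pd_formula S _ (zr t) α (hzα t ht), hhdef, Finset.mul_sum]
    refine Finset.sum_congr rfl fun j _ => ?_
    have h2 : ((t ^ (l j x) : ℝ) : ℂ) = ((t ^ (l i x) : ℝ) : ℂ) * ((t ^ (l j x - l i x) : ℝ) : ℂ) := by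
      rw [← Complex.ofReal_mul, ← Real.rpow_add ht]; ring_nf
    linear_combination ((j α : ℤ) : ℂ) * hval j t ht + ((j α : ℤ) : ℂ) * B j * h2
  -- limit of h
  set L : ℂ := (((i α : ℤ) : ℂ) - ((j₁ α : ℤ) : ℂ)) * B i with hLdef
  have hBj₁ : B j₁ = -B i := by
    have := hbsum
    rw [hBdef]
    linear_combination this
  have htend : Tendsto h atTop (nhds L) := by
    have hsum : Tendsto h atTop (nhds (∑ j ∈ S,
        (if j = i then ((i α : ℤ) : ℂ) * B i else if j = j₁ then ((j₁ α : ℤ) : ℂ) * B j₁ else 0))) := by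
      rw [hhdef]
      apply tendsto_finset_sum
      intro j hj
      by_cases hji : j = i
      · subst hji
        rw [if_pos rfl]
        have he : (fun t : ℝ => ((j α : ℤ) : ℂ) * ((t ^ (l j x - l j x) : ℝ) : ℂ) * B j)
            = fun _ => ((j α : ℤ) : ℂ) * B j := by
          funext t; rw [sub_self, Real.rpow_zero]; simp
        rw [he]; exact tendsto_const_nhds
      · by_cases hjj : j = j₁
        · subst hjj
          rw [if_neg hji, if_pos rfl]
          have h0 : l j x - l i x = 0 := by rw [← hface.1, sub_self]
          have he : (fun t : ℝ => ((j α : ℤ) : ℂ) * ((t ^ (l j x - l i x) : ℝ) : ℂ) * B j)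
              = fun _ => ((j α : ℤ) : ℂ) * B j := by
            funext t; rw [h0, Real.rpow_zero]; simp
          rw [he]; exact tendsto_const_nhds
        · simp only [if_neg hji, if_neg hjj]
          have hlt : l j x - l i x < 0 := sub_neg.2 (hface.2 j hj hji hjj)
          have h0 : Tendsto (fun t : ℝ => (t ^ (l j x - l i x) : ℝ)) atTop (nhds 0) := by
            have := tendsto_rpow_neg_atTop (y := -(l j x - l i x)) (by linarith)
            simpa using this
          have := ((Complex.continuous_ofReal.tendsto 0).comp h0).const_mul ((j α : ℤ) : ℂ)
          simpa using this.mul_const (B j)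
    have : (∑ j ∈ S,
        (if j = i then ((i α : ℤ) : ℂ) * B i else if j = j₁ then ((j₁ α : ℤ) : ℂ) * B j₁ else 0)) = L := by
      rw [← Finset.sum_erase_add S _ hi, Finset.sum_eq_single_of_mem j₁
        (Finset.mem_erase.2 ⟨Ne.symm hij, hj₁⟩)]
      · rw [if_neg (Ne.symm hij), if_pos rfl, if_pos rfl, hBj₁, hLdef]; ring
      · intro k hk hkj
        simp [if_neg (Finset.mem_erase.1 hk).1, if_neg hkj]
    rwa [this] at hsum
  have hL0 : L ≠ 0 := by
    apply mul_ne_zero _ (hB i)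
    intro hc
    apply hα
    have : ((i α : ℤ) : ℂ) = ((j₁ α : ℤ) : ℂ) := by linear_combination hc
    exact_mod_cast this
  have hpos : ∀ᶠ t : ℝ in atTop, (0 : ℝ) < t := eventually_gt_atTop 0
  have hne : ∀ᶠ t : ℝ in atTop, h t ≠ 0 := htend.eventually_ne hL0
  constructor
  · filter_upwards [hpos, hne] with t ht hht
    rw [hkey t ht]
    exact mul_ne_zero (by exact_mod_cast (Real.rpow_pos_of_pos ht (l i x)).ne') hht
  · have heq : ∀ᶠ t : ℝ in atTop,
        ((((t ^ (-(v i)) : ℝ) : ℂ) * ∏ β, zr t β ^ (i β)) / (zr t α * pd t α (zr t)))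
          = B i / h t := by
      filter_upwards [hpos] with t ht
      rw [hkey t ht, hval i t ht, mul_div_mul_left _ _
        (by exact_mod_cast (Real.rpow_pos_of_pos ht (l i x)).ne' : ((t ^ (l i x) : ℝ) : ℂ) ≠ 0)]
    have hlim : Tendsto (fun t : ℝ => B i / h t) atTop (nhds (B i / L)) :=
      tendsto_const_nhds.div htend hL0
    have : B i / L = 1 / ((i α - j₁ α : ℤ) : ℂ) := by
      rw [hLdef, mul_comm, div_mul_eq_div_div, div_self (hB i)]
      push_cast
      ring
    rw [← this]
    exact hlim.congr' (heq.mono fun t ht => ht.symm)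
end

section
/- Let j^{(0)}, j^{(1)}, …, j^{(n+1)} be distinct elements of S such that the (n+1)×(n+1) real matrix M with entries M_{α,p} = j^{(p)}_α − j^{(0)}_α (α, p = 1,…,n+1) is invertible, and let x ∈ ℝ^{n+1} satisfy l_{v,j^{(0)}}(x) = l_{v,j^{(1)}}(x) = … = l_{v,j^{(n+1)}}(x) > l_{v,k}(x) for all other k ∈ S (x is a vertex of Π_v). Let b ∈ (ℂ∖{0})^{n+1} satisfy Σ_{p=0}^{n+1} b^{j^{(p)}} = 0. Then there exists α ∈ {1,…,n+1} with Σ_{p=1}^{n+1} (j^{(p)}_α − j^{(0)}_α) b^{j^{(p)}} ≠ 0, and for any such α, along the ray z(t): lim_{t→+∞} (t^{−v(j^{(0)})} z(t)^{j^{(0)}}) / (z(t)_α · ∂f_t/∂z_α(z(t))) = b^{j^{(0)}} / Σ_{p=1}^{n+1} (j^{(p)}_α − j^{(0)}_α) b^{j^{(p)}}. -/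
open Filter

private lemma ray_prod {m : ℕ} (t : ℝ) (ht : 0 < t) (x : Fin m → ℝ) (b : Fin m → ℂ)
    (k : Fin m → ℤ) :
    ∏ β, (((t ^ (x β) : ℝ) : ℂ) * b β) ^ (k β)
      = ((t ^ (∑ β, (k β : ℝ) * x β) : ℝ) : ℂ) * ∏ β, b β ^ (k β) := by
  have h1 : ∀ β : Fin m, (((t ^ (x β) : ℝ) : ℂ) * b β) ^ (k β)
      = ((t ^ ((k β : ℝ) * x β) : ℝ) : ℂ) * b β ^ (k β) := by
    intro β
    rw [mul_zpow, ← Complex.ofReal_zpow, ← Real.rpow_intCast (t ^ x β) (k β),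
      ← Real.rpow_mul ht.le, mul_comm (x β)]
  rw [Finset.prod_congr rfl fun β _ => h1 β, Finset.prod_mul_distrib,
    Real.rpow_sum_of_pos ht, Complex.ofReal_prod]

private lemma zmul_pd {m : ℕ} (S : Finset (Fin m → ℤ)) (c : (Fin m → ℤ) → ℂ)
    (z : Fin m → ℂ) (hz : ∀ β, z β ≠ 0) (α : Fin m) :
    z α * deriv (fun w => ∑ k ∈ S, c k * ∏ β, (Function.update z α w β) ^ (k β)) (z α)
      = ∑ k ∈ S, c k * ((k α : ℂ) * ∏ β, z β ^ (k β)) := by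
  have hprod : ∀ (k : Fin m → ℤ) (w : ℂ),
      ∏ β, (Function.update z α w β) ^ (k β)
        = w ^ (k α) * ∏ β ∈ Finset.univ.erase α, z β ^ (k β) := by
    intro k w
    have h : ∀ β : Fin m, (Function.update z α w β) ^ (k β)
        = Function.update (fun β => z β ^ (k β)) α (w ^ (k α)) β := by
      intro β
      rcases eq_or_ne β α with h | h
      · subst h; simp
      · simp [Function.update_of_ne h]
    rw [Finset.prod_congr rfl fun β _ => h β,
      Finset.prod_update_of_mem (Finset.mem_univ α), Finset.sdiff_singleton_eq_erase]
  have hdw : ∀ q : ℤ, DifferentiableAt ℂ (fun w : ℂ => w ^ q) (z α) :=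
    fun q => differentiableAt_zpow.2 (Or.inl (hz α))
  have hfun : (fun w => ∑ k ∈ S, c k * ∏ β, (Function.update z α w β) ^ (k β))
      = fun w => ∑ k ∈ S, (c k * ∏ β ∈ Finset.univ.erase α, z β ^ (k β)) * w ^ (k α) := by
    funext w
    refine Finset.sum_congr rfl fun k _ => ?_
    rw [hprod k w]; ring
  rw [hfun, deriv_fun_sum fun k _ => ((hdw (k α)).const_mul _), Finset.mul_sum]
  refine Finset.sum_congr rfl fun k _ => ?_
  rw [deriv_const_mul _ (hdw (k α)), deriv_zpow]
  have hzz : z α * z α ^ (k α - 1) = z α ^ (k α) := by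
    rw [mul_comm, ← zpow_add_one₀ (hz α) (k α - 1), sub_add_cancel]
  have hP := Finset.mul_prod_erase Finset.univ (fun β => z β ^ (k β)) (Finset.mem_univ α)
  calc z α * ((c k * ∏ β ∈ Finset.univ.erase α, z β ^ (k β)) * (↑(k α) * z α ^ (k α - 1)))
      = c k * (↑(k α) * ((z α * z α ^ (k α - 1)) * ∏ β ∈ Finset.univ.erase α, z β ^ (k β))) := by
        ring
    _ = c k * (↑(k α) * ∏ β, z β ^ (k β)) := by rw [hzz, hP]

/-- At a vertex `x` of `Π_v` dual to the simplex with vertices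
`j⁰, j¹, …, j^{n+1} ∈ S` (the matrix `M_{α,p} = j^{(p)}_α - j^{(0)}_α` being invertible), if
`b ∈ (ℂ∖{0})^{n+1}` satisfies `Σ_{p=0}^{n+1} b^{j^{(p)}} = 0`, then some index `α` has
`Σ_{p=1}^{n+1} (j^{(p)}_α - j^{(0)}_α) b^{j^{(p)}} ≠ 0`, and for any such `α`, along the ray
`z(t)_β = t^{x_β} b_β` one has
`(t^{-v(j⁰)} z(t)^{j⁰}) / (z(t)_α ∂f_t/∂z_α(z(t))) → b^{j⁰} / Σ_{p=1}^{n+1} (j^{(p)}_α - j^{(0)}_α) b^{j^{(p)}}`. -/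
theorem vertex_residue_quotient_limit (n : ℕ) (hn : 1 ≤ n)
    (S : Finset (Fin (n + 1) → ℤ)) (hS : S.Nonempty)
    (v : (Fin (n + 1) → ℤ) → ℝ)
    (l : (Fin (n + 1) → ℤ) → (Fin (n + 1) → ℝ) → ℝ)
    (hl : ∀ j x, l j x = ∑ α, (j α : ℝ) * x α - v j)
    (f : ℝ → (Fin (n + 1) → ℂ) → ℂ)
    (hf : ∀ t z, f t z = ∑ j ∈ S, ((t ^ (-(v j)) : ℝ) : ℂ) * ∏ α, z α ^ (j α))
    (pd : ℝ → Fin (n + 1) → (Fin (n + 1) → ℂ) → ℂ)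
    (hpd : ∀ t α z, pd t α z = deriv (fun w => f t (Function.update z α w)) (z α))
    (j : Fin (n + 2) → (Fin (n + 1) → ℤ))
    (hjinj : Function.Injective j)
    (hjS : ∀ p, j p ∈ S)
    (M : Matrix (Fin (n + 1)) (Fin (n + 1)) ℝ)
    (hM : ∀ α p, M α p = ((j p.succ α - j 0 α : ℤ) : ℝ))
    (hMinv : IsUnit M)
    (x : Fin (n + 1) → ℝ)
    (hvertex : (∀ p, l (j p) x = l (j 0) x) ∧
      ∀ k ∈ S, (∀ p, k ≠ j p) → l k x < l (j 0) x)
    (b : Fin (n + 1) → ℂ) (hb : ∀ α, b α ≠ 0)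
    (hbsum : ∑ p : Fin (n + 2), ∏ β, b β ^ (j p β) = 0)
    (zr : ℝ → Fin (n + 1) → ℂ)
    (hz : ∀ t β, zr t β = ((t ^ (x β) : ℝ) : ℂ) * b β) :
    (∃ α, ∑ p : Fin (n + 1),
        ((j p.succ α - j 0 α : ℤ) : ℂ) * ∏ β, b β ^ (j p.succ β) ≠ 0) ∧
    (∀ α, (∑ p : Fin (n + 1),
        ((j p.succ α - j 0 α : ℤ) : ℂ) * ∏ β, b β ^ (j p.succ β)) ≠ 0 →
      Tendsto (fun t : ℝ =>
          (((t ^ (-(v (j 0))) : ℝ) : ℂ) * ∏ β, zr t β ^ (j 0 β)) / (zr t α * pd t α (zr t)))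
        atTop (nhds ((∏ β, b β ^ (j 0 β)) /
          ∑ p : Fin (n + 1), ((j p.succ α - j 0 α : ℤ) : ℂ) * ∏ β, b β ^ (j p.succ β)))) := by
  have hbprod : ∀ k : Fin (n + 1) → ℤ, (∏ β, b β ^ (k β)) ≠ 0 := fun k =>
    Finset.prod_ne_zero_iff.2 fun β _ => zpow_ne_zero _ (hb β)
  constructor
  · -- Part 1: existence of α
    by_contra hcon
    push_neg at hcon
    set Mc : Matrix (Fin (n + 1)) (Fin (n + 1)) ℂ :=
      M.map (Complex.ofRealHom : ℝ →+* ℂ) with hMc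
    have hdet : Mc.det ≠ 0 := by
      rw [hMc, ← RingHom.mapMatrix_apply, ← RingHom.map_det]
      simpa using
        (isUnit_iff_ne_zero.mp (Matrix.isUnit_iff_isUnit_det M |>.mp hMinv))
    have hmv : Mc.mulVec (fun p => ∏ β, b β ^ (j p.succ β)) = 0 := by
      funext α
      have := hcon α
      simp only [Matrix.mulVec, dotProduct, hMc, Matrix.map_apply, hM,
        Complex.ofRealHom_eq_coe, Pi.zero_apply]
      push_cast at this ⊢
      exact this
    have hzero := Matrix.eq_zero_of_mulVec_eq_zero hdet hmv
    exact hbprod (j (0 : Fin (n + 1)).succ) (congrFun hzero 0)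
  · -- Part 2: the limit
    intro α hα
    set L := l (j 0) x with hLdef
    -- exact value of the term for any k translated along the ray
    have hterm : ∀ (t : ℝ), 0 < t → ∀ k : Fin (n + 1) → ℤ,
        ((t ^ (-(v k)) : ℝ) : ℂ) * ∏ β, zr t β ^ (k β)
          = ((t ^ (l k x) : ℝ) : ℂ) * ∏ β, b β ^ (k β) := by
      intro t ht k
      have hzrw : ∀ β : Fin (n + 1), zr t β ^ (k β)
          = (((t ^ (x β) : ℝ) : ℂ) * b β) ^ (k β) := fun β => by rw [hz]
      rw [Finset.prod_congr rfl fun β _ => hzrw β, ray_prod t ht x b k, ← mul_assoc,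
        ← Complex.ofReal_mul, ← Real.rpow_add ht, hl]
      ring_nf
    have hzne : ∀ t : ℝ, 0 < t → ∀ β, zr t β ≠ 0 := by
      intro t ht β
      rw [hz]
      exact mul_ne_zero (Complex.ofReal_ne_zero.2 (Real.rpow_pos_of_pos ht _).ne') (hb β)
    -- pointwise identity for t > 0
    have key : ∀ t : ℝ, 0 < t →
        (((t ^ (-(v (j 0))) : ℝ) : ℂ) * ∏ β, zr t β ^ (j 0 β)) / (zr t α * pd t α (zr t))
          = (∏ β, b β ^ (j 0 β)) /
            (∑ k ∈ S, (k α : ℂ) * ((t ^ (l k x - L) : ℝ) : ℂ) * ∏ β, b β ^ (k β)) := by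
      intro t ht
      have hden : zr t α * pd t α (zr t)
          = ((t ^ L : ℝ) : ℂ) *
            ∑ k ∈ S, (k α : ℂ) * ((t ^ (l k x - L) : ℝ) : ℂ) * ∏ β, b β ^ (k β) := by
        rw [hpd]
        have : (fun w => f t (Function.update (zr t) α w))
            = fun w => ∑ k ∈ S, ((t ^ (-(v k)) : ℝ) : ℂ) *
                ∏ β, (Function.update (zr t) α w β) ^ (k β) := by
          funext w; rw [hf]
        rw [this, zmul_pd S _ (zr t) (hzne t ht) α, Finset.mul_sum]
        refine Finset.sum_congr rfl fun k hk => ?_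
        have h1 : ((t ^ (-(v k)) : ℝ) : ℂ) * ((k α : ℂ) * ∏ β, zr t β ^ (k β))
            = (k α : ℂ) * (((t ^ (-(v k)) : ℝ) : ℂ) * ∏ β, zr t β ^ (k β)) := by ring
        rw [h1, hterm t ht k]
        have h2 : (t ^ (l k x) : ℝ) = (t ^ L : ℝ) * (t ^ (l k x - L) : ℝ) := by
          rw [← Real.rpow_add ht]; ring_nf
        rw [h2]
        push_cast
        ring
      rw [hterm t ht (j 0), hden, ← hLdef,
        mul_comm ((t ^ L : ℝ) : ℂ) (∏ β, b β ^ (j 0 β)),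
        mul_comm ((t ^ L : ℝ) : ℂ)
          (∑ k ∈ S, (k α : ℂ) * ((t ^ (l k x - L) : ℝ) : ℂ) * ∏ β, b β ^ (k β)),
        mul_div_mul_right _ _ (Complex.ofReal_ne_zero.2 (Real.rpow_pos_of_pos ht _).ne')]
    -- the limit of the denominator
    classical
    set T : Finset (Fin (n + 1) → ℤ) := Finset.image j Finset.univ with hT
    have hDinf : (∑ k ∈ S, if k ∈ T then (k α : ℂ) * ∏ β, b β ^ (k β) else 0)
        = ∑ p : Fin (n + 1), ((j p.succ α - j 0 α : ℤ) : ℂ) * ∏ β, b β ^ (j p.succ β) := by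
      have hsub : T ⊆ S := by
        intro k hk
        obtain ⟨p, _, rfl⟩ := Finset.mem_image.1 hk
        exact hjS p
      rw [Finset.sum_ite_mem, Finset.inter_eq_right.2 hsub, hT,
        Finset.sum_image (fun p _ q _ h => hjinj h)]
      have hsum0 : (∏ β, b β ^ (j 0 β)) +
          ∑ p : Fin (n + 1), ∏ β, b β ^ (j p.succ β) = 0 := by
        rw [← Fin.sum_univ_succ (fun p => ∏ β, b β ^ (j p β))]
        exact hbsum
      rw [Fin.sum_univ_succ (fun p => (j p α : ℂ) * ∏ β, b β ^ (j p β))]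
      have : (∑ p : Fin (n + 1), ∏ β, b β ^ (j p.succ β)) = -(∏ β, b β ^ (j 0 β)) := by
        linear_combination hsum0
      have expand : ∀ p : Fin (n + 1),
          ((j p.succ α - j 0 α : ℤ) : ℂ) * ∏ β, b β ^ (j p.succ β)
            = (j p.succ α : ℂ) * ∏ β, b β ^ (j p.succ β)
              - (j 0 α : ℂ) * ∏ β, b β ^ (j p.succ β) := by
        intro p; push_cast; ring
      rw [Finset.sum_congr rfl fun p _ => expand p, Finset.sum_sub_distrib,
        ← Finset.mul_sum, this]
      ring
    have hDlim : Tendsto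
        (fun t : ℝ => ∑ k ∈ S, (k α : ℂ) * ((t ^ (l k x - L) : ℝ) : ℂ) * ∏ β, b β ^ (k β))
        atTop (nhds (∑ p : Fin (n + 1),
          ((j p.succ α - j 0 α : ℤ) : ℂ) * ∏ β, b β ^ (j p.succ β))) := by
      rw [← hDinf]
      refine tendsto_finset_sum _ fun k hk => ?_
      by_cases hkT : k ∈ T
      · simp only [hkT, if_true]
        have he : l k x - L = 0 := by
          obtain ⟨p, _, rfl⟩ := Finset.mem_image.1 hkT
          rw [hvertex.1 p]; simp [hLdef]
        have : (fun t : ℝ => (k α : ℂ) * ((t ^ (l k x - L) : ℝ) : ℂ) * ∏ β, b β ^ (k β))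
            = fun _ : ℝ => (k α : ℂ) * ∏ β, b β ^ (k β) := by
          funext t; rw [he, Real.rpow_zero]; push_cast; ring
        rw [this]
        exact tendsto_const_nhds
      · simp only [hkT, if_false]
        have hne : ∀ p, k ≠ j p := by
          intro p hp
          exact hkT (Finset.mem_image.2 ⟨p, Finset.mem_univ p, hp.symm⟩)
        have he : l k x - L < 0 := sub_neg.2 (hvertex.2 k hk hne)
        have h0 : Tendsto (fun t : ℝ => ((t ^ (l k x - L) : ℝ) : ℂ)) atTop (nhds 0) := by
          have hr : Tendsto (fun t : ℝ => t ^ (l k x - L)) atTop (nhds 0) := by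
            have := tendsto_rpow_neg_atTop (y := -(l k x - L)) (by linarith)
            simpa using this
          have := (Complex.continuous_ofReal.tendsto 0).comp hr
          exact this
        have := (h0.const_mul ((k α : ℂ))).mul_const (∏ β, b β ^ (k β))
        simpa using this
    have hfinal : Tendsto
        (fun t : ℝ => (∏ β, b β ^ (j 0 β)) /
          (∑ k ∈ S, (k α : ℂ) * ((t ^ (l k x - L) : ℝ) : ℂ) * ∏ β, b β ^ (k β)))
        atTop (nhds ((∏ β, b β ^ (j 0 β)) /
          ∑ p : Fin (n + 1), ((j p.succ α - j 0 α : ℤ) : ℂ) * ∏ β, b β ^ (j p.succ β))) :=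
      Tendsto.div tendsto_const_nhds hDlim hα
    refine hfinal.congr' ?_
    filter_upwards [eventually_gt_atTop (0 : ℝ)] with t ht
    exact (key t ht).symm
end
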